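/- Under the stated hypotheses, and assuming additionally that g² is μ-integrable, the variance of the importance-sampled estimand satisfies Var_{ρ·μ}(g/ρ) ≤ Var_μ(g), i.e. ∫_D g²/ρ dμ − (∫_D g dμ)² ≤ ∫_D g² dμ − (∫_D g dμ)². (Variance-reduction corollary of Theorem 4.2.) -/

import Mathlib

open MeasureTheory

/-- Variance-reduction corollary of Theorem 4.2:
`Var_{ρ·μ}(g/ρ) = ∫ g²/ρ dμ − (∫ g dμ)² ≤ ∫ g² dμ − (∫ g dμ)² = Var_μ(g)`. -/
theorem mixture_density_variance_reduction
    {D : Type*} [MeasurableSpace D] (μ : Measure D) [IsProbabilityMeasure μ]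
    (g τ ρt ρ : D → ℝ) (I : ℝ)
    (hg : Measurable g) (hg0 : ∀ y, 0 ≤ g y)
    (hI : I = ∫ y, (g y) ^ 2 ∂μ) (hIpos : 0 < I)
    (hg2 : Integrable (fun y => (g y) ^ 2) μ)
    (hτ : Measurable τ) (hτ01 : ∀ y, τ y ∈ Set.Icc (0 : ℝ) 1)
    (hρt : ρt = fun y => (g y) ^ 2 / I)
    (hρ : ρ = fun y => (1 - τ y) + τ y * ρt y)
    (hρ1 : ∫ y, ρ y ∂μ = 1)
    (hρpos : ∀ᵐ y ∂μ, 0 < ρ y) :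
    (∫ y, (g y) ^ 2 / ρ y ∂μ) - (∫ y, g y ∂μ) ^ 2
      ≤ (∫ y, (g y) ^ 2 ∂μ) - (∫ y, g y ∂μ) ^ 2 := by
  have hIne : I ≠ 0 := ne_of_gt hIpos
  have hρmeas : Measurable ρ := by
    subst hρ hρt
    fun_prop
  -- integrability of ρ
  have hτint : Integrable τ μ := by
    refine Integrable.mono' (integrable_const 1) hτ.aestronglyMeasurable ?_
    filter_upwards with y
    have h := hτ01 y
    rw [Real.norm_eq_abs, abs_le]; constructor <;> [linarith [h.1]; exact h.2]
  have hτρt : Integrable (fun y => τ y * ρt y) μ := by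
    refine Integrable.mono' ((hg2.div_const I).const_mul 1) ?_ ?_
    · subst hρt; exact (hτ.mul (hg.pow_const 2 |>.div_const I)).aestronglyMeasurable
    · filter_upwards with y
      have h := hτ01 y
      have hρt0 : 0 ≤ ρt y := by
        subst hρt; positivity
      have hρteq : ρt y = g y ^ 2 / I := by rw [hρt]
      rw [Real.norm_eq_abs, abs_of_nonneg (mul_nonneg h.1 hρt0), one_mul, ← hρteq]
      nlinarith [mul_le_mul_of_nonneg_right h.2 hρt0]
  have hρint : Integrable ρ μ := by
    subst hρ; exact ((integrable_const 1).sub hτint).add hτρt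
  -- pointwise key inequality
  have key : ∀ᵐ y ∂μ, (g y) ^ 2 / ρ y ≤ (g y) ^ 2 + I * (1 - ρ y) := by
    filter_upwards [hρpos] with y hy
    rw [div_le_iff₀ hy]
    have h1 : I * ρ y = I * (1 - τ y) + τ y * (g y) ^ 2 := by
      subst hρ hρt; field_simp
    have ht := hτ01 y
    have hcross : 0 ≤ τ y * (1 - τ y) * (I - (g y) ^ 2) ^ 2 :=
      mul_nonneg (mul_nonneg ht.1 (by linarith [ht.2])) (sq_nonneg _)
    have h2 : I * (1 - ρ y) = τ y * (I - (g y) ^ 2) := by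
      have : I * (1 - ρ y) = I - I * ρ y := by ring
      rw [this, h1]; ring
    have h3 : ((g y) ^ 2 + I * (1 - ρ y)) * ρ y * I
        = ((g y) ^ 2 + τ y * (I - (g y) ^ 2)) * (I * (1 - τ y) + τ y * (g y) ^ 2) := by
      rw [h2]
      have e : ((g y) ^ 2 + τ y * (I - (g y) ^ 2)) * ρ y * I
          = ((g y) ^ 2 + τ y * (I - (g y) ^ 2)) * (I * ρ y) := by ring
      rw [e, h1]
    have hgoal : (g y) ^ 2 * I ≤ ((g y) ^ 2 + I * (1 - ρ y)) * ρ y * I := by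
      rw [h3]; nlinarith [hcross]
    have := (mul_le_mul_iff_of_pos_right hIpos).mp hgoal
    linarith
  -- integrability of g²/ρ
  have hnonneg : ∀ᵐ y ∂μ, 0 ≤ (g y) ^ 2 / ρ y := by
    filter_upwards [hρpos] with y hy
    positivity
  have hbnd : Integrable (fun y => (g y) ^ 2 + I * (1 - ρ y)) μ :=
    hg2.add (((integrable_const 1).sub hρint).const_mul I)
  have hint : Integrable (fun y => (g y) ^ 2 / ρ y) μ := by
    refine Integrable.mono' hbnd ((hg.pow_const 2).div hρmeas).aestronglyMeasurable ?_
    filter_upwards [key, hnonneg] with y h1 h2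
    rw [Real.norm_eq_abs, abs_of_nonneg h2]; exact h1
  have hle : ∫ y, (g y) ^ 2 / ρ y ∂μ ≤ ∫ y, ((g y) ^ 2 + I * (1 - ρ y)) ∂μ :=
    integral_mono_ae hint hbnd key
  have h1ρ : Integrable (fun y => 1 - ρ y) μ := by
    exact (integrable_const (1 : ℝ)).sub hρint
  have hz : ∫ y, (1 - ρ y) ∂μ = 0 := by
    rw [integral_sub (integrable_const 1) hρint, hρ1]
    simp
  have hcomp : ∫ y, ((g y) ^ 2 + I * (1 - ρ y)) ∂μ = ∫ y, (g y) ^ 2 ∂μ := by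
    rw [integral_add hg2 (h1ρ.const_mul I), integral_const_mul, hz]
    simp
  rw [hcomp] at hle
  linarith
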